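/- Let C_α(t) be an exponentially bounded α-order fractional cosine family with generator A and let S_α(t)x = ∫₀ᵗ C_α(s)x ds. Then for every x ∈ D(A) and t ≥ 0: S_α(t)x = t·x + J_t^α (S_α(·)Ax)(t), where J_t^α is the Riemann–Liouville integral of order α. -/

import Mathlib

open MeasureTheory Set


/-- An exponentially bounded `α`-order solution operator (fractional cosine family)
with (possibly unbounded) generator `Aop` defined on `dom`. -/
structure FracCosine (X : Type*) [NormedAddCommGroup X] [NormedSpace ℝ X] (α : ℝ) where
  C : ℝ → X →L[ℝ] X
  dom : Set X
  Aop : X → X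
  strong_cont : ∀ x : X, ContinuousOn (fun t => C t x) (Ici 0)
  C_zero : C 0 = ContinuousLinearMap.id ℝ X
  maps_dom : ∀ x ∈ dom, ∀ t : ℝ, 0 ≤ t → C t x ∈ dom
  comm : ∀ x ∈ dom, ∀ t : ℝ, 0 ≤ t → Aop (C t x) = C t (Aop x)
  volterra : ∀ x ∈ dom, ∀ t : ℝ, 0 ≤ t →
    C t x = x + ∫ s in (0:ℝ)..t, ((t - s) ^ (α - 1) / Real.Gamma α) • Aop (C s x)
  M : ℝ
  ω : ℝ
  hM : 1 ≤ M
  hω : 0 ≤ ω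
  bound : ∀ t : ℝ, 0 ≤ t → ‖C t‖ ≤ M * Real.exp (ω * t)

lemma tri_swap {X : Type*} [NormedAddCommGroup X] [NormedSpace ℝ X] [CompleteSpace X]
    (g : ℝ → ℝ → X) (hg : Continuous fun p : ℝ × ℝ => g p.1 p.2) {t : ℝ} (ht : 0 ≤ t) :
    (∫ s in (0:ℝ)..t, ∫ r in (0:ℝ)..s, g s r) = ∫ r in (0:ℝ)..t, ∫ s in r..t, g s r := by
  have hmeas : MeasurableSet {p : ℝ × ℝ | p.2 ≤ p.1} := measurableSet_le measurable_snd measurable_fst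
  set F : ℝ × ℝ → X := ({p : ℝ × ℝ | p.2 ≤ p.1}).indicator (fun p => g p.1 p.2) with hF
  have hFval : ∀ s r : ℝ, F (s, r) = if r ≤ s then g s r else 0 := by
    intro s r
    by_cases h : r ≤ s <;> simp [hF, Set.indicator, h]
  have hFint : Integrable F ((volume.restrict (Ioc (0:ℝ) t)).prod (volume.restrict (Ioc (0:ℝ) t))) := by
    rw [Measure.prod_restrict]
    apply Integrable.indicator _ hmeas
    have hcpt : IsCompact (Icc (0:ℝ) t ×ˢ Icc (0:ℝ) t) := isCompact_Icc.prod isCompact_Icc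
    have : IntegrableOn (fun p : ℝ × ℝ => g p.1 p.2) (Icc (0:ℝ) t ×ˢ Icc (0:ℝ) t) (volume.prod volume) := by
      rw [← Measure.volume_eq_prod]
      exact hg.continuousOn.integrableOn_compact hcpt
    exact this.mono_set (Set.prod_mono Ioc_subset_Icc_self Ioc_subset_Icc_self)
  have swap := MeasureTheory.integral_integral_swap (f := fun s r => F (s, r)) hFint
  have hL : (∫ s in (0:ℝ)..t, ∫ r in (0:ℝ)..s, g s r)
      = ∫ s in Ioc (0:ℝ) t, ∫ r in Ioc (0:ℝ) t, F (s, r) := by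
    rw [intervalIntegral.integral_of_le ht]
    refine setIntegral_congr_fun measurableSet_Ioc (fun s hs => ?_)
    have h1 : ∀ r, F (s, r) = (Iic s).indicator (g s) r := by
      intro r; by_cases h : r ≤ s <;> simp [hFval, Set.indicator, h]
    simp_rw [h1]
    rw [integral_indicator measurableSet_Iic, Measure.restrict_restrict measurableSet_Iic]
    have : Iic s ∩ Ioc 0 t = Ioc 0 s := by
      ext r; constructor
      · rintro ⟨h1, h2, h3⟩; exact ⟨h2, h1⟩
      · rintro ⟨h1, h2⟩; exact ⟨h2, h1, h2.trans hs.2⟩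
    rw [this, intervalIntegral.integral_of_le hs.1.le]
  have hR : (∫ r in (0:ℝ)..t, ∫ s in r..t, g s r)
      = ∫ r in Ioc (0:ℝ) t, ∫ s in Ioc (0:ℝ) t, F (s, r) := by
    rw [intervalIntegral.integral_of_le ht]
    refine setIntegral_congr_fun measurableSet_Ioc (fun r hr => ?_)
    have h1 : ∀ s, F (s, r) = (Ici r).indicator (fun s => g s r) s := by
      intro s; by_cases h : r ≤ s <;> simp [hFval, Set.indicator, h]
    simp_rw [h1]
    rw [integral_indicator measurableSet_Ici, Measure.restrict_restrict measurableSet_Ici]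
    have : Ici r ∩ Ioc 0 t = Icc r t := by
      ext s; constructor
      · rintro ⟨h1, h2, h3⟩; exact ⟨h1, h3⟩
      · rintro ⟨h1, h2⟩; exact ⟨h1, hr.1.trans_le h1, h2⟩
    rw [this, integral_Icc_eq_integral_Ioc, intervalIntegral.integral_of_le hr.2]
  rw [hL, hR]
  exact swap

/-- For an exponentially bounded `α`-order fractional cosine family `C_α` with
generator `A` and sine family `S_α(t)x = ∫₀ᵗ C_α(s)x ds`, one has
`S_α(t)x = t • x + J_t^α (S_α(·) A x)(t)` for every `x ∈ D(A)` and `t ≥ 0`. -/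
theorem sine_volterra_identity {X : Type*} [NormedAddCommGroup X] [NormedSpace ℝ X]
    [CompleteSpace X] {α : ℝ} (hα : α ∈ Set.Ioc 1 2) (S : FracCosine X α)
    (x : X) (hx : x ∈ S.dom) (t : ℝ) (ht : 0 ≤ t) :
    (∫ s in (0:ℝ)..t, S.C s x)
      = t • x + ∫ s in (0:ℝ)..t,
          ((t - s) ^ (α - 1) / Real.Gamma α) • (∫ r in (0:ℝ)..s, S.C r (S.Aop x)) := by
  obtain ⟨hα1, hα2⟩ := hα
  have hαne : α ≠ 0 := by linarith
  set y := S.Aop x with hy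
  set f : ℝ → X := fun r => S.C (max r 0) y with hfdef
  have hf : Continuous f :=
    (S.strong_cont y).comp_continuous (continuous_id.max continuous_const)
      (fun r => Set.mem_Ici.mpr (le_max_right _ _))
  have hfeq : ∀ r : ℝ, 0 ≤ r → f r = S.C r y := by
    intro r hr; simp [hfdef, max_eq_left hr]
  have hkcont : Continuous fun u : ℝ => u ^ (α - 1) := by
    rw [continuous_iff_continuousAt]
    intro u
    exact Real.continuousAt_rpow_const u _ (Or.inr (by linarith))
  -- kernel integral values
  have hker1 : ∀ r : ℝ, (∫ s in r..t, (s - r) ^ (α - 1)) = (t - r) ^ α / α := by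
    intro r
    rw [intervalIntegral.integral_comp_sub_right (fun u => u ^ (α - 1)) r, sub_self,
      integral_rpow (Or.inl (by linarith)), sub_add_cancel, Real.zero_rpow hαne]
    ring
  have hker2 : ∀ r : ℝ, (∫ s in r..t, (t - s) ^ (α - 1)) = (t - r) ^ α / α := by
    intro r
    rw [intervalIntegral.integral_comp_sub_left (fun u => u ^ (α - 1)) t, sub_self,
      integral_rpow (Or.inl (by linarith)), sub_add_cancel, Real.zero_rpow hαne]
    ring
  -- Volterra identity with f
  have hvol : ∀ s : ℝ, 0 ≤ s →
      S.C s x - x = ∫ r in (0:ℝ)..s, ((s - r) ^ (α - 1) / Real.Gamma α) • f r := by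
    intro s hs
    have h1 := S.volterra x hx s hs
    have h2 : (∫ r in (0:ℝ)..s, ((s - r) ^ (α - 1) / Real.Gamma α) • S.Aop (S.C r x))
        = ∫ r in (0:ℝ)..s, ((s - r) ^ (α - 1) / Real.Gamma α) • f r := by
      refine intervalIntegral.integral_congr (fun r hr => ?_)
      rw [uIcc_of_le hs] at hr
      rw [S.comm x hx r hr.1, hfeq r hr.1]
    rw [h1, h2]; abel
  -- LHS split
  have hCcont : ContinuousOn (fun s => S.C s x) (Icc 0 t) :=
    (S.strong_cont x).mono (fun s hs => hs.1)
  have hCint : IntervalIntegrable (fun s => S.C s x) volume 0 t :=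
    (hCcont.mono (by rw [uIcc_of_le ht])).intervalIntegrable
  have hsplit : (∫ s in (0:ℝ)..t, S.C s x)
      = t • x + ∫ s in (0:ℝ)..t, (S.C s x - x) := by
    rw [intervalIntegral.integral_sub hCint intervalIntegrable_const,
      intervalIntegral.integral_const, sub_zero]
    abel
  -- the two triangular terms
  set g1 : ℝ → ℝ → X := fun s r => ((s - r) ^ (α - 1) / Real.Gamma α) • f r with hg1
  set g2 : ℝ → ℝ → X := fun s r => ((t - s) ^ (α - 1) / Real.Gamma α) • f r with hg2
  have hg1c : Continuous fun p : ℝ × ℝ => g1 p.1 p.2 :=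
    ((hkcont.comp (continuous_fst.sub continuous_snd)).div_const _).smul (hf.comp continuous_snd)
  have hg2c : Continuous fun p : ℝ × ℝ => g2 p.1 p.2 :=
    ((hkcont.comp (continuous_const.sub continuous_fst)).div_const _).smul (hf.comp continuous_snd)
  have hval : ∀ (g : ℝ → ℝ → X), (∀ r, (∫ s in r..t, g s r) = ((t - r) ^ α / α / Real.Gamma α) • f r) →
      Continuous (fun p : ℝ × ℝ => g p.1 p.2) →
      (∫ s in (0:ℝ)..t, ∫ r in (0:ℝ)..s, g s r)
        = ∫ r in (0:ℝ)..t, ((t - r) ^ α / α / Real.Gamma α) • f r := by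
    intro g hgval hgc
    rw [tri_swap g hgc ht]
    simp only [hgval]
  have hval1 : (∫ s in (0:ℝ)..t, ∫ r in (0:ℝ)..s, g1 s r)
      = ∫ r in (0:ℝ)..t, ((t - r) ^ α / α / Real.Gamma α) • f r := by
    refine hval g1 (fun r => ?_) hg1c
    rw [hg1]
    rw [intervalIntegral.integral_smul_const, intervalIntegral.integral_div, hker1 r]
  have hval2 : (∫ s in (0:ℝ)..t, ∫ r in (0:ℝ)..s, g2 s r)
      = ∫ r in (0:ℝ)..t, ((t - r) ^ α / α / Real.Gamma α) • f r := by
    refine hval g2 (fun r => ?_) hg2c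
    rw [hg2]
    rw [intervalIntegral.integral_smul_const, intervalIntegral.integral_div, hker2 r]
  -- identify LHS inner term
  have hL2 : (∫ s in (0:ℝ)..t, (S.C s x - x)) = ∫ s in (0:ℝ)..t, ∫ r in (0:ℝ)..s, g1 s r := by
    refine intervalIntegral.integral_congr (fun s hs => ?_)
    rw [uIcc_of_le ht] at hs
    exact hvol s hs.1
  -- identify RHS term
  have hR2 : (∫ s in (0:ℝ)..t, ((t - s) ^ (α - 1) / Real.Gamma α) • (∫ r in (0:ℝ)..s, S.C r y))
      = ∫ s in (0:ℝ)..t, ∫ r in (0:ℝ)..s, g2 s r := by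
    refine intervalIntegral.integral_congr (fun s hs => ?_)
    rw [uIcc_of_le ht] at hs
    have hinner : (∫ r in (0:ℝ)..s, S.C r y) = ∫ r in (0:ℝ)..s, f r := by
      refine intervalIntegral.integral_congr (fun r hr => ?_)
      rw [uIcc_of_le hs.1] at hr
      exact (hfeq r hr.1).symm
    rw [hinner, ← intervalIntegral.integral_smul]
  rw [hsplit, hL2, hval1, hR2, hval2]
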